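/- For every m ≥ 0 and every k with 0 < k < p, the polynomial identity P_{pm+k}^p(t) = (1/p) · t^{m·Δ_{p−2} + Δ_{k−1}} · (Σ_{j=0}^{p−k−1} t^{jk}) · P_m^p(t) + (1/p) · t^{m·Δ_{p−2} + Δ_{k−2}} · (Σ_{j=0}^{k−1} t^{j(p−k)}) · P_{m+1}^p(t) holds. -/

import Mathlib

open MeasureTheory
open scoped NNReal ENNReal

namespace Chacon

/-- The space of digit sequences with digits in `{0, …, p-1}`. -/
def Gamma (p : ℕ) : Set (ℕ → ℕ) := {x | ∀ i, x i < p}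

/-- `Γ*`: sequences with digits `< p` having infinitely many coordinates `≠ p - 1`. -/
def GammaStar (p : ℕ) : Set (ℕ → ℕ) :=
  {x | (∀ i, x i < p) ∧ {i | x i ≠ p - 1}.Infinite}

/-- The least index `i` with `x i ≠ p - 1`. -/
noncomputable def firstNot (p : ℕ) (x : ℕ → ℕ) : ℕ :=
  sInf {i | x i ≠ p - 1}

/-- `φ(x) = x_i` where `i` is the least index with `x_i ≠ p - 1`. -/
noncomputable def phi (p : ℕ) (x : ℕ → ℕ) : ℕ :=
  x (firstNot p x)

/-- The odometer `S` (addition of `1` with carry): the initial run of digits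
`p - 1` is replaced by zeros, and the first digit `≠ p - 1` is increased by one. -/
noncomputable def odo (p : ℕ) (x : ℕ → ℕ) : ℕ → ℕ :=
  fun i =>
    if i < firstNot p x then 0
    else if i = firstNot p x then x i + 1
    else x i

/-- `φ^(m)(x) = ∑_{j=0}^{m-1} φ(S^j x)`. -/
noncomputable def phiSum (p m : ℕ) (x : ℕ → ℕ) : ℕ :=
  ∑ j ∈ Finset.range m, phi p ((odo p)^[j] x)

/-- The base-`p` digit sequence of a real number `u`. -/
noncomputable def digitsOf (p : ℕ) (u : ℝ) : ℕ → ℕ :=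
  fun i => (⌊u * (p : ℝ) ^ (i + 1)⌋).toNat % p

/-- `λ`: the product probability measure on digit sequences under which the
coordinates are i.i.d., uniformly distributed in `{0, …, p-1}`; it is realized
concretely as the distribution of the base-`p` digit sequence of a uniformly
distributed random point of `[0,1)`. -/
noncomputable def lam (p : ℕ) : Measure (ℕ → ℕ) :=
  Measure.map (digitsOf p) (volume.restrict (Set.Ico (0 : ℝ) 1))

/-- `π_m(j) = λ({x : φ^(m)(x) = j})`. -/
noncomputable def pim (p m j : ℕ) : ℝ≥0∞ :=
  lam p {x | phiSum p m x = j}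

/-- `P_m^p(t) = ∑_{j ≥ 0} π_m(j) t^j`, a real polynomial
(the sum is over `0 ≤ j ≤ m (p-2)` since `0 ≤ φ^(m) ≤ m (p-2)` a.s.). -/
noncomputable def P (p m : ℕ) (t : ℝ) : ℝ :=
  ∑ j ∈ Finset.range (m * (p - 2) + 1), (pim p m j).toReal * t ^ j

/-- The `n`-th triangular number `Δ_n = n (n+1) / 2`. -/
def tri (n : ℕ) : ℕ := n * (n + 1) / 2

/-- The degree `D_m` of `P_m^p`: the largest `j` with `π_m(j) ≠ 0`. -/
noncomputable def D (p m : ℕ) : ℕ := sSup {j | pim p m j ≠ 0}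

/-- The lower degree `d_m` of `P_m^p`: the least `j` with `π_m(j) ≠ 0`. -/
noncomputable def d (p m : ℕ) : ℕ := sInf {j | pim p m j ≠ 0}



/-! ### Auxiliary lemmas -/

/-- digit contribution -/
def f0 (p b : ℕ) : ℕ := if b = p - 1 then 0 else b

def cons (a : ℕ) (y : ℕ → ℕ) : ℕ → ℕ := fun i => Nat.casesOn i a y

@[simp] lemma cons_zero (a : ℕ) (y : ℕ → ℕ) : cons a y 0 = a := rfl
@[simp] lemma cons_succ (a : ℕ) (y : ℕ → ℕ) (i : ℕ) : cons a y (i+1) = y i := rfl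

lemma firstNot_cons_of_ne {p a : ℕ} (y : ℕ → ℕ) (h : a ≠ p - 1) :
    firstNot p (cons a y) = 0 :=
  Nat.sInf_eq_zero.mpr (Or.inl h)

lemma phi_cons_of_ne {p a : ℕ} (y : ℕ → ℕ) (h : a ≠ p - 1) :
    phi p (cons a y) = a := by
  simp [phi, firstNot_cons_of_ne y h]

lemma odo_cons_of_ne {p a : ℕ} (y : ℕ → ℕ) (h : a ≠ p - 1) :
    odo p (cons a y) = cons (a + 1) y := by
  funext i
  simp only [odo, firstNot_cons_of_ne y h]
  cases i <;> simp

lemma firstNot_cons_eq {p : ℕ} {y : ℕ → ℕ} (h : ∃ i, y i ≠ p - 1) :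
    firstNot p (cons (p - 1) y) = firstNot p y + 1 := by
  have hmem : firstNot p y ∈ {i | y i ≠ p - 1} := Nat.sInf_mem h
  apply le_antisymm
  · exact Nat.sInf_le (by simpa using hmem)
  · apply Nat.le_of_not_lt
    intro hlt
    have hmem2 : firstNot p (cons (p-1) y) ∈ {i | cons (p-1) y i ≠ p - 1} := by
      apply Nat.sInf_mem
      exact ⟨firstNot p y + 1, by simpa using hmem⟩
    rcases Nat.eq_zero_or_eq_succ_pred (firstNot p (cons (p-1) y)) with h0 | hs
    · rw [h0] at hmem2; simp at hmem2
    · rw [hs] at hmem2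
      have : y (firstNot p (cons (p-1) y) - 1) ≠ p - 1 := by simpa using hmem2
      have hle : firstNot p y ≤ firstNot p (cons (p-1) y) - 1 :=
        Nat.sInf_le (show (firstNot p (cons (p-1) y) - 1) ∈ {i | y i ≠ p - 1} from this)
      omega

lemma phi_cons_eq {p : ℕ} {y : ℕ → ℕ} (h : ∃ i, y i ≠ p - 1) :
    phi p (cons (p - 1) y) = phi p y := by
  simp [phi, firstNot_cons_eq h]

lemma odo_cons_eq {p : ℕ} {y : ℕ → ℕ} (h : ∃ i, y i ≠ p - 1) :
    odo p (cons (p - 1) y) = cons 0 (odo p y) := by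
  funext i
  simp only [odo, firstNot_cons_eq h]
  cases i with
  | zero => simp
  | succ i =>
    simp only [cons_succ, odo]
    by_cases h1 : i < firstNot p y
    · simp [h1, Nat.succ_lt_succ h1]
    · by_cases h2 : i = firstNot p y
      · simp [h1, h2]
      · have h3 : ¬ (i + 1 < firstNot p y + 1) := by omega
        have h4 : ¬ (i + 1 = firstNot p y + 1) := by omega
        simp [h1, h2, h3, h4]

lemma mem_gammaStar_odo {p : ℕ} {y : ℕ → ℕ} (hy : y ∈ GammaStar p) :
    odo p y ∈ GammaStar p := by
  obtain ⟨hlt, hinf⟩ := hy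
  have hne : {i | y i ≠ p - 1}.Nonempty := hinf.nonempty
  have hfn : y (firstNot p y) ≠ p - 1 := Nat.sInf_mem hne
  have hp0 : 0 < p := lt_of_le_of_lt (Nat.zero_le _) (hlt 0)
  constructor
  · intro i
    by_cases h1 : i < firstNot p y
    · simp only [odo, if_pos h1]; omega
    · by_cases h2 : i = firstNot p y
      · have hne2 : y i ≠ p - 1 := h2 ▸ hfn
        have := hlt i
        simp only [odo, if_neg h1, if_pos h2]
        omega
      · simp only [odo, if_neg h1, if_neg h2]
        exact hlt i
  · apply Set.Infinite.mono (s := {i | y i ≠ p - 1} \ Set.Iic (firstNot p y))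
    · rintro i ⟨hi, hi2⟩
      simp only [Set.mem_Iic, not_le] at hi2
      have h1 : ¬ i < firstNot p y := by omega
      have h2 : i ≠ firstNot p y := by omega
      simpa [odo, h1, h2] using hi
    · exact hinf.diff (Set.finite_Iic _)

lemma phiSum_succ (p n : ℕ) (x : ℕ → ℕ) :
    phiSum p (n+1) x = phiSum p n (odo p x) + phi p x := by
  unfold phiSum
  rw [Finset.sum_range_succ']
  simp only [Function.iterate_succ_apply, Function.iterate_zero_apply]

lemma phiSum_cons (p : ℕ) (hp : 2 ≤ p) :
    ∀ (n a : ℕ) (y : ℕ → ℕ), a < p → y ∈ GammaStar p →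
      phiSum p n (cons a y) =
        (∑ j ∈ Finset.range n, f0 p ((a + j) % p)) + phiSum p ((n + a) / p) y := by
  intro n
  induction n with
  | zero =>
    intro a y ha hy
    simp [phiSum, Nat.div_eq_of_lt ha]
  | succ n ih =>
    intro a y ha hy
    rw [phiSum_succ]
    by_cases h : a = p - 1
    · -- carry case
      subst h
      have hex : ∃ i, y i ≠ p - 1 := hy.2.nonempty
      rw [odo_cons_eq hex, phi_cons_eq hex]
      rw [ih 0 (odo p y) (by omega) (mem_gammaStar_odo hy)]
      have hdiv : (n + 1 + (p-1)) / p = n / p + 1 := by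
        have : n + 1 + (p - 1) = n + p := by omega
        rw [this, Nat.add_div_right _ (by omega)]
      rw [hdiv]
      rw [phiSum_succ]
      have hsum : (∑ j ∈ Finset.range (n+1), f0 p ((p - 1 + j) % p))
          = ∑ j ∈ Finset.range n, f0 p ((0 + j) % p) := by
        rw [Finset.sum_range_succ']
        have h1 : ∀ j, (p - 1 + (j+1)) % p = (0 + j) % p := by
          intro j
          have : p - 1 + (j + 1) = p + j := by omega
          rw [this]
          simp [Nat.add_mod_left]
        have h2 : f0 p ((p - 1 + 0) % p) = 0 := by
          have : (p - 1 + 0) % p = p - 1 := by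
            apply Nat.mod_eq_of_lt; omega
          simp [f0, this]
        rw [h2]
        simp only [h1]
        simp
      rw [hsum]
      have : (n + 0) / p = n / p := by simp
      rw [this]
      ring
    · -- no carry
      rw [odo_cons_of_ne y h, phi_cons_of_ne y h]
      rw [ih (a+1) y (by omega) hy]
      have hdiv : (n + (a+1)) / p = (n + 1 + a) / p := by ring_nf
      rw [hdiv]
      have hsum : (∑ j ∈ Finset.range (n+1), f0 p ((a + j) % p))
          = (∑ j ∈ Finset.range n, f0 p ((a + 1 + j) % p)) + a := by
        rw [Finset.sum_range_succ']
        congr 1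
        · apply Finset.sum_congr rfl
          intro j _
          congr 2
          omega
        · have ha0 : a % p = a := Nat.mod_eq_of_lt (by omega)
          simp [f0, ha0, h]
      rw [hsum]
      ring

lemma firstNot_eq_iff (p n : ℕ) (x : ℕ → ℕ) :
    firstNot p x = n ↔
      ((x n ≠ p - 1 ∧ ∀ m < n, x m = p - 1) ∨ (n = 0 ∧ ∀ m, x m = p - 1)) := by
  by_cases h : ∃ i, x i ≠ p - 1
  · constructor
    · intro hn
      left
      have hmem : x (firstNot p x) ≠ p - 1 := Nat.sInf_mem h
      refine ⟨hn ▸ hmem, fun m hm => ?_⟩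
      by_contra hc
      have : firstNot p x ≤ m := Nat.sInf_le hc
      omega
    · rintro (⟨h1, h2⟩ | ⟨rfl, h2⟩)
      · apply le_antisymm (Nat.sInf_le h1)
        apply le_csInf ⟨n, h1⟩
        intro m hm
        by_contra hc
        exact hm (h2 m (by omega))
      · obtain ⟨i, hi⟩ := h
        exact absurd (h2 i) hi
  · push_neg at h
    have hempty : {i | x i ≠ p - 1} = ∅ := by
      ext i; simp [h i]
    constructor
    · intro hn
      right
      refine ⟨?_, h⟩
      rw [← hn]
      simp [firstNot, hempty]
    · rintro (⟨h1, _⟩ | ⟨rfl, _⟩)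
      · exact absurd (h _) h1
      · simp [firstNot, hempty]

lemma measurableSet_coord (m v : ℕ) : MeasurableSet {x : ℕ → ℕ | x m = v} := by
  have : {x : ℕ → ℕ | x m = v} = (fun x : ℕ → ℕ => x m) ⁻¹' {v} := rfl
  rw [this]
  exact (measurable_pi_apply m) (measurableSet_singleton v)

lemma measurableSet_firstNot (p n : ℕ) :
    MeasurableSet {x : ℕ → ℕ | firstNot p x = n} := by
  have : {x : ℕ → ℕ | firstNot p x = n} =
      ({x | x n ≠ p - 1} ∩ ⋂ m ∈ Set.Iio n, {x | x m = p - 1}) ∪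
      ({x : ℕ → ℕ | n = 0} ∩ ⋂ m : ℕ, {x | x m = p - 1}) := by
    ext x
    simp only [Set.mem_setOf_eq, Set.mem_union, Set.mem_inter_iff, Set.mem_iInter,
      Set.mem_Iio, firstNot_eq_iff p n x]
  rw [this]
  apply MeasurableSet.union
  · exact (((measurableSet_coord n (p-1)).compl)).inter
      (MeasurableSet.biInter (Set.to_countable _) fun m _ => measurableSet_coord m (p-1))
  · refine MeasurableSet.inter ?_ (MeasurableSet.iInter fun m => measurableSet_coord m (p-1))
    by_cases h : n = 0 <;> simp [h]

lemma measurable_firstNot (p : ℕ) : Measurable (firstNot p) :=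
  measurable_to_countable' fun n => measurableSet_firstNot p n


lemma measurable_phi (p : ℕ) : Measurable (phi p) := by
  apply measurable_to_countable'
  intro j
  show MeasurableSet {x : ℕ → ℕ | phi p x = j}
  have : {x : ℕ → ℕ | phi p x = j} =
      ⋃ n : ℕ, ({x | firstNot p x = n} ∩ {x | x n = j}) := by
    ext x
    simp only [Set.mem_setOf_eq, Set.mem_iUnion, Set.mem_inter_iff]
    constructor
    · intro h; exact ⟨firstNot p x, rfl, h⟩
    · rintro ⟨n, h1, h2⟩; rw [phi, h1]; exact h2
  rw [this]
  exact MeasurableSet.iUnion fun n => (measurableSet_firstNot p n).inter (measurableSet_coord n j)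


lemma measurable_odo (p : ℕ) : Measurable (odo p) := by
  apply measurable_pi_lambda
  intro i
  have : (fun x => odo p x i) =
      (fun q : ℕ × ℕ => if i < q.1 then 0 else if i = q.1 then q.2 + 1 else q.2) ∘
        (fun x => (firstNot p x, x i)) := rfl
  rw [this]
  exact (measurable_of_countable _).comp ((measurable_firstNot p).prodMk (measurable_pi_apply i))


lemma measurable_phiSum (p n : ℕ) : Measurable (phiSum p n) := by
  apply Finset.measurable_sum
  intro j _
  exact (measurable_phi p).comp ((measurable_odo p).iterate j)


lemma measurable_digitsOf (p : ℕ) : Measurable (digitsOf p) := by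
  apply measurable_pi_lambda
  intro i
  exact (measurable_of_countable (fun z : ℤ => z.toNat % p)).comp
    (Measurable.floor (measurable_id.mul_const _))

lemma tri_two (n : ℕ) : 2 * tri n = n * (n + 1) := by
  unfold tri
  rw [Nat.mul_div_cancel' ]
  exact (Nat.even_mul_succ_self n).two_dvd

lemma tri_succ (n : ℕ) : tri (n + 1) = tri n + (n + 1) := by
  have h1 := tri_two (n+1)
  have h2 := tri_two n
  nlinarith

lemma tri_add (a b : ℕ) : tri (a + b) = tri a + tri b + a * b := by
  have h1 := tri_two (a+b)
  have h2 := tri_two a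
  have h3 := tri_two b
  nlinarith

lemma sum_range_id_tri (n : ℕ) : ∑ i ∈ Finset.range n, i = tri (n - 1) := by
  cases n with
  | zero => simp [tri]
  | succ n =>
    have h := Finset.sum_range_id_mul_two (n+1)
    have h2 := tri_two n
    simp only [Nat.add_sub_cancel]
    have h3 : (n+1) * (n+1-1) = n * (n+1) := by
      simp only [Nat.add_sub_cancel]
      ring
    omega

lemma f0_le (p b : ℕ) (hp : 2 ≤ p) (hb : b < p) : f0 p b ≤ p - 2 := by
  unfold f0
  split <;> omega

lemma cycle_shift (p : ℕ) (hp : 2 ≤ p) (a : ℕ) :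
    ∑ j ∈ Finset.range p, f0 p ((a + 1 + j) % p) =
    ∑ j ∈ Finset.range p, f0 p ((a + j) % p) := by
  have h := Finset.sum_range_succ (fun j => f0 p ((a + j) % p)) p
  have h' := Finset.sum_range_succ' (fun j => f0 p ((a + j) % p)) p
  have e1 : (a + p) % p = a % p := Nat.add_mod_right a p
  have e2 : ∀ j, (a + (j + 1)) % p = (a + 1 + j) % p := fun j => by
    congr 1; omega
  rw [e1] at h
  simp only [e2] at h'
  have e3 : (a + 0) % p = a % p := by rw [Nat.add_zero]
  rw [e3] at h'
  omega

lemma cycle (p : ℕ) (hp : 2 ≤ p) (a : ℕ) :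
    ∑ j ∈ Finset.range p, f0 p ((a + j) % p) = tri (p - 2) := by
  induction a with
  | zero =>
    rw [show Finset.range p = Finset.range ((p-1)+1) from by congr 1; omega,
      Finset.sum_range_succ]
    have e1 : ∀ j ∈ Finset.range (p-1), f0 p ((0 + j) % p) = j := by
      intro j hj
      simp only [Finset.mem_range] at hj
      have : (0 + j) % p = j := by
        rw [Nat.zero_add]; exact Nat.mod_eq_of_lt (by omega)
      rw [this]
      unfold f0
      split <;> omega
    rw [Finset.sum_congr rfl e1]
    have e2 : (0 + (p - 1)) % p = p - 1 := by
      rw [Nat.zero_add]; exact Nat.mod_eq_of_lt (by omega)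
    rw [e2]
    have : f0 p (p - 1) = 0 := by unfold f0; simp
    rw [this, sum_range_id_tri]
    have : p - 1 - 1 = p - 2 := by omega
    rw [this]
    omega
  | succ a ih =>
    rw [cycle_shift p hp a, ih]

lemma sum_pm (p : ℕ) (hp : 2 ≤ p) (m k a : ℕ) :
    ∑ j ∈ Finset.range (p * m + k), f0 p ((a + j) % p) =
      m * tri (p - 2) + ∑ j ∈ Finset.range k, f0 p ((a + j) % p) := by
  induction m with
  | zero => simp
  | succ m ih =>
    have e1 : p * (m + 1) + k = p + (p * m + k) := by ring
    rw [e1, Finset.sum_range_add]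
    have e2 : ∀ j, (a + (p + j)) % p = (a + j) % p := fun j => by
      rw [show a + (p + j) = a + j + p from by omega, Nat.add_mod_right]
    simp only [e2]
    rw [ih, cycle p hp a]
    ring

lemma E1 (p k a : ℕ) (hp : 2 ≤ p) (hk0 : 0 < k) (hkp : k < p) (ha : a < p - k) :
    ∑ j ∈ Finset.range k, f0 p ((a + j) % p) = k * a + tri (k - 1) := by
  have e1 : ∀ j ∈ Finset.range k, f0 p ((a + j) % p) = a + j := by
    intro j hj
    simp only [Finset.mem_range] at hj
    have h1 : (a + j) % p = a + j := Nat.mod_eq_of_lt (by omega)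
    rw [h1]
    unfold f0
    split <;> omega
  rw [Finset.sum_congr rfl e1, Finset.sum_add_distrib, Finset.sum_const,
    Finset.card_range, sum_range_id_tri, smul_eq_mul]

lemma Earith (p k j : ℕ) (hk0 : 0 < k) (hkp : k < p) (hj : j < k) :
    (k - j - 1) * (p - k + j) + tri (k - j - 2) + tri (j - 1) =
      tri (k - 2) + (k - 1 - j) * (p - k) := by
  rcases Nat.eq_zero_or_pos j with rfl | hj0
  · have e1 : k - 0 - 1 = k - 1 := by omega
    have e2 : k - 0 - 2 = k - 2 := by omega
    have e3 : (0:ℕ) - 1 = 0 := by omega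
    have e8 : k - 1 - 0 = k - 1 := by omega
    rw [e1, e2, e3, e8, Nat.add_zero]
    have h0 : tri 0 = 0 := rfl
    omega
  · rcases Nat.lt_or_ge j (k - 1) with hlt | hge
    · -- general: j ≥ 1, j ≤ k - 2
      obtain ⟨j', rfl⟩ : ∃ j', j = j' + 1 := ⟨j - 1, by omega⟩
      obtain ⟨r', hk⟩ : ∃ r', k = j' + r' + 3 := ⟨k - j' - 3, by omega⟩
      obtain ⟨q', hq⟩ : ∃ q', p = k + q' + 1 := ⟨p - k - 1, by omega⟩
      subst hk
      subst hq
      have e1 : j' + r' + 3 - (j' + 1) - 1 = r' + 1 := by omega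
      have e2 : j' + r' + 3 - (j' + 1) - 2 = r' := by omega
      have e3 : j' + 1 - 1 = j' := by omega
      have e4 : j' + r' + 3 - 2 = j' + (r' + 1) := by omega
      have e5 : j' + r' + 3 - 1 - (j' + 1) = r' + 1 := by omega
      have e6 : j' + r' + 3 + q' + 1 - (j' + r' + 3) = q' + 1 := by omega
      have e7 : j' + r' + 3 + q' + 1 - (j' + r' + 3) + (j' + 1) = q' + j' + 2 := by omega
      simp only [show j'+r'+3 - (j'+1) - 1 = r'+1 from by omega,
        show j'+r'+3+q'+1 - (j'+r'+3) + (j'+1) = q'+j'+2 from by omega,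
        show j'+r'+3 - (j'+1) - 2 = r' from by omega,
        show j'+1-1 = j' from by omega,
        show j'+r'+3-2 = j'+(r'+1) from by omega,
        show j'+r'+3-1-(j'+1) = r'+1 from by omega,
        show j'+r'+3+q'+1 - (j'+r'+3) = q'+1 from by omega]
      rw [tri_add j' (r'+1), tri_succ r']
      ring
    · -- j = k - 1
      have hj1 : j = k - 1 := by omega
      subst hj1
      have e1 : k - (k-1) - 1 = 0 := by omega
      have e2 : k - (k-1) - 2 = 0 := by omega
      have e3 : k - 1 - (k - 1) = 0 := by omega
      have e4 : k - 1 - 1 = k - 2 := by omega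
      rw [e1, e2, e3, e4]
      have h0 : tri 0 = 0 := rfl
      omega

lemma E2 (p k j : ℕ) (hp : 2 ≤ p) (hk0 : 0 < k) (hkp : k < p) (hj : j < k) :
    ∑ i ∈ Finset.range k, f0 p ((p - k + j + i) % p) =
      tri (k - 2) + (k - 1 - j) * (p - k) := by
  rw [← Earith p k j hk0 hkp hj]
  have hsplit : Finset.range k = Finset.range ((k - j) + j) := by
    congr 1; omega
  rw [hsplit, Finset.sum_range_add]
  have e2 : ∀ i ∈ Finset.range j, f0 p ((p - k + j + (k - j + i)) % p) = i := by
    intro i hi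
    simp only [Finset.mem_range] at hi
    have h1 : p - k + j + (k - j + i) = i + p := by omega
    rw [h1, Nat.add_mod_right]
    have h2 : i % p = i := Nat.mod_eq_of_lt (by omega)
    rw [h2]
    unfold f0
    split <;> omega
  rw [Finset.sum_congr rfl e2, sum_range_id_tri]
  have hsp2 : Finset.range (k - j) = Finset.range ((k - j - 1) + 1) := by
    congr 1; omega
  rw [hsp2, Finset.sum_range_succ]
  have e3 : ∀ i ∈ Finset.range (k - j - 1),
      f0 p ((p - k + j + i) % p) = p - k + j + i := by
    intro i hi
    simp only [Finset.mem_range] at hi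
    have h2 : (p - k + j + i) % p = p - k + j + i := Nat.mod_eq_of_lt (by omega)
    rw [h2]
    unfold f0
    split <;> omega
  rw [Finset.sum_congr rfl e3]
  have e4 : (p - k + j + (k - j - 1)) % p = p - 1 := by
    rw [show p - k + j + (k - j - 1) = p - 1 from by omega]
    exact Nat.mod_eq_of_lt (by omega)
  rw [e4]
  have e5 : f0 p (p - 1) = 0 := by unfold f0; simp
  rw [e5]
  have e6 : ∑ i ∈ Finset.range (k - j - 1), (p - k + j + i) =
      (k - j - 1) * (p - k + j) + tri (k - j - 2) := by
    rw [Finset.sum_add_distrib, Finset.sum_const, Finset.card_range, sum_range_id_tri,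
      smul_eq_mul]
    have : k - j - 1 - 1 = k - j - 2 := by omega
    rw [this]
  rw [e6]
  omega



lemma digitsOf_lt (p : ℕ) (hp : 0 < p) (u : ℝ) (i : ℕ) : digitsOf p u i < p :=
  Nat.mod_lt _ hp

/-- floor recurrence -/
lemma floor_rec (p : ℕ) (u : ℝ) (i : ℕ) :
    ⌊u * (p:ℝ) ^ (i + 1 + 1)⌋ =
      p * ⌊u * (p:ℝ) ^ (i+1)⌋ + ⌊(p:ℝ) * Int.fract (u * (p:ℝ)^(i+1))⌋ := by
  have h1 : u * (p:ℝ) ^ (i+1+1) =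
      (p:ℝ) * Int.fract (u * (p:ℝ)^(i+1)) + ((p * ⌊u * (p:ℝ)^(i+1)⌋ : ℤ) : ℝ) := by
    rw [Int.fract]
    push_cast
    ring
  rw [h1, Int.floor_add_intCast]
  ring

lemma fract_rec (p : ℕ) (u : ℝ) (i : ℕ) :
    Int.fract (u * (p:ℝ) ^ (i + 1 + 1)) =
      Int.fract ((p:ℝ) * Int.fract (u * (p:ℝ)^(i+1))) := by
  have h1 : u * (p:ℝ) ^ (i+1+1) =
      (p:ℝ) * Int.fract (u * (p:ℝ)^(i+1)) + ((p * ⌊u * (p:ℝ)^(i+1)⌋ : ℤ) : ℝ) := by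
    rw [Int.fract]; push_cast; ring
  rw [h1, Int.fract_add_intCast]

lemma floor_p_fract_lt (p : ℕ) (hp : 0 < p) (x : ℝ) :
    ⌊(p:ℝ) * Int.fract x⌋ < p ∧ 0 ≤ ⌊(p:ℝ) * Int.fract x⌋ := by
  constructor
  · have hpr : (0:ℝ) < p := by exact_mod_cast hp
    have : (p:ℝ) * Int.fract x < p := by
      nlinarith [Int.fract_lt_one x, Int.fract_nonneg x]
    exact_mod_cast Int.floor_lt.mpr (by exact_mod_cast this)
  · apply Int.floor_nonneg.mpr
    exact mul_nonneg (by positivity) (Int.fract_nonneg x)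

/-- expression of the next digit -/
lemma digit_succ_eq (p : ℕ) (hp : 0 < p) (u : ℝ) (hu : 0 ≤ u) (i : ℕ) :
    digitsOf p u (i+1) = (⌊(p:ℝ) * Int.fract (u * (p:ℝ)^(i+1))⌋).toNat := by
  have hb : 0 ≤ ⌊u * (p:ℝ)^(i+1)⌋ := Int.floor_nonneg.mpr (by positivity)
  obtain ⟨h1, h2⟩ := floor_p_fract_lt p hp (u * (p:ℝ)^(i+1))
  unfold digitsOf
  rw [floor_rec p u i]
  set B := ⌊u * (p:ℝ)^(i+1)⌋ with hB
  set E := ⌊(p:ℝ) * Int.fract (u * (p:ℝ)^(i+1))⌋ with hE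
  have hBb : (p:ℤ) * B = ((p * B.toNat : ℕ) : ℤ) := by
    push_cast
    rw [Int.toNat_of_nonneg hb]
  rw [hBb]
  have h3 : (((p * B.toNat : ℕ) : ℤ) + E).toNat = p * B.toNat + E.toNat := by omega
  rw [h3, Nat.mul_add_mod]
  exact Nat.mod_eq_of_lt (by omega)

/-- if the next digit is p-1 then 1 - fract shrinks by factor p -/
lemma fract_step (p : ℕ) (hp : 0 < p) (u : ℝ) (hu : 0 ≤ u) (i : ℕ)
    (hd : digitsOf p u (i+1) = p - 1) :
    1 - Int.fract (u * (p:ℝ)^(i+1+1)) = p * (1 - Int.fract (u * (p:ℝ)^(i+1))) := by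
  obtain ⟨h1, h2⟩ := floor_p_fract_lt p hp (u * (p:ℝ)^(i+1))
  have hfloor : ⌊(p:ℝ) * Int.fract (u * (p:ℝ)^(i+1))⌋ = (p:ℤ) - 1 := by
    have h := digit_succ_eq p hp u hu i
    rw [hd] at h
    omega
  have hfr := fract_rec p u i
  rw [hfr, Int.fract, hfloor]
  have hp1 : (1:ℝ) ≤ (p:ℝ) := by exact_mod_cast hp
  push_cast
  ring


/-- digits are not eventually all `p-1` -/
lemma digits_infinite (p : ℕ) (hp : 2 ≤ p) (u : ℝ) (hu : 0 ≤ u) :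
    {i | digitsOf p u i ≠ p - 1}.Infinite := by
  by_contra hfin
  rw [Set.not_infinite] at hfin
  obtain ⟨N, hN⟩ := hfin.bddAbove
  have hall : ∀ i, digitsOf p u (N + 1 + i) = p - 1 := by
    intro i
    by_contra hc
    have := hN (Set.mem_setOf.mpr hc)
    omega
  set M := N + 1 with hM
  have key : ∀ j, 1 - Int.fract (u * (p:ℝ)^(M+j+1)) =
      (p:ℝ)^j * (1 - Int.fract (u * (p:ℝ)^(M+1))) := by
    intro j
    induction j with
    | zero => simp
    | succ j ih =>
      have hstep := fract_step p (by omega) u hu (M + j)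
        (by
          have h := hall (j+1)
          have he : M + j + 1 = N + 1 + (j+1) := by omega
          rw [he]; exact h)
      have he : M + (j+1) + 1 = M + j + 1 + 1 := by omega
      rw [he, hstep, ih]
      ring
  have hg0 : 0 < 1 - Int.fract (u * (p:ℝ)^(M+1)) := by
    have := Int.fract_lt_one (u * (p:ℝ)^(M+1))
    linarith
  have hp1 : (1:ℝ) < p := by exact_mod_cast (by omega : 1 < p)
  obtain ⟨n, hn⟩ := pow_unbounded_of_one_lt (1 / (1 - Int.fract (u * (p:ℝ)^(M+1)))) hp1
  have h1 : 1 - Int.fract (u * (p:ℝ)^(M+n+1)) ≤ 1 := by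
    have := Int.fract_nonneg (u * (p:ℝ)^(M+n+1))
    linarith
  have h2 := key n
  have : (1:ℝ) < (p:ℝ)^n * (1 - Int.fract (u * (p:ℝ)^(M+1))) := by
    rw [div_lt_iff₀ hg0] at hn
    linarith
  linarith


lemma mem_piece_iff (p a : ℕ) (hp : 0 < p) (u : ℝ) :
    u ∈ Set.Ico ((a:ℝ)/p) (((a:ℝ)+1)/p) ↔ (p:ℝ)*u - a ∈ Set.Ico (0:ℝ) 1 := by
  have hpr : (0:ℝ) < p := by exact_mod_cast hp
  simp only [Set.mem_Ico, div_le_iff₀ hpr, lt_div_iff₀ hpr]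
  constructor
  · rintro ⟨h1, h2⟩
    constructor <;> nlinarith
  · rintro ⟨h1, h2⟩
    constructor <;> nlinarith

lemma digit0_eq (p a : ℕ) (hp : 0 < p) (ha : a < p) (u : ℝ)
    (hu : u ∈ Set.Ico ((a:ℝ)/p) (((a:ℝ)+1)/p)) : digitsOf p u 0 = a := by
  have hpr : (0:ℝ) < p := by exact_mod_cast hp
  obtain ⟨h1, h2⟩ := hu
  have hfl : ⌊u * (p:ℝ)^(0+1)⌋ = (a:ℤ) := by
    rw [pow_one]
    apply Int.floor_eq_iff.mpr
    constructor
    · push_cast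
      rw [div_le_iff₀ hpr] at h1
      nlinarith
    · push_cast
      rw [lt_div_iff₀ hpr] at h2
      nlinarith
  unfold digitsOf
  rw [hfl]
  simp [Nat.mod_eq_of_lt ha]

lemma tail_eq (p a : ℕ) (hp : 0 < p) (u : ℝ) (hu : (a:ℝ)/p ≤ u) (i : ℕ) :
    digitsOf p u (i+1) = digitsOf p ((p:ℝ)*u - a) i := by
  have hpr : (0:ℝ) < p := by exact_mod_cast hp
  unfold digitsOf
  have h1 : ((p:ℝ)*u - a) * (p:ℝ)^(i+1) = u * (p:ℝ)^(i+1+1) - ((a * p^(i+1) : ℕ) : ℝ) := by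
    push_cast
    ring
  rw [h1, Int.floor_sub_natCast]
  have hau : (a:ℝ) ≤ (p:ℝ) * u := by
    rw [div_le_iff₀ hpr] at hu
    nlinarith
  have hge : ((a * p^(i+1) : ℕ) : ℤ) ≤ ⌊u * (p:ℝ)^(i+1+1)⌋ := by
    apply Int.le_floor.mpr
    push_cast
    have hpow : (0:ℝ) ≤ (p:ℝ)^(i+1) := by positivity
    have : u * (p:ℝ)^(i+1+1) = ((p:ℝ)*u) * (p:ℝ)^(i+1) := by ring
    rw [this]
    exact mul_le_mul_of_nonneg_right hau hpow
  have hnn : 0 ≤ ⌊u * (p:ℝ)^(i+1+1)⌋ := le_trans (by positivity) hge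
  obtain ⟨n, hn⟩ : ∃ n : ℕ, ⌊u * (p:ℝ)^(i+1+1)⌋ = (n:ℤ) :=
    ⟨_, (Int.toNat_of_nonneg hnn).symm⟩
  rw [hn]
  rw [hn] at hge
  have hle : a * p^(i+1) ≤ n := by exact_mod_cast hge
  have h2 : (((n:ℤ)) - ((a * p^(i+1) : ℕ) : ℤ)).toNat = n - a * p^(i+1) := by omega
  rw [h2]
  have h3 : a * p^(i+1) = p * (a * p^i) := by ring
  rw [h3] at hle ⊢
  rw [Nat.sub_mul_mod hle]
  simp


lemma digits_mem_gammaStar (p : ℕ) (hp : 2 ≤ p) (u : ℝ) (hu : 0 ≤ u) :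
    digitsOf p u ∈ GammaStar p :=
  ⟨fun i => digitsOf_lt p (by omega) u i, digits_infinite p hp u hu⟩

lemma phi_le (p : ℕ) (hp : 2 ≤ p) (x : ℕ → ℕ) (hx : x ∈ GammaStar p) :
    phi p x ≤ p - 2 := by
  have hne : {i | x i ≠ p - 1}.Nonempty := hx.2.nonempty
  have h1 : x (firstNot p x) ≠ p - 1 := Nat.sInf_mem hne
  have h2 := hx.1 (firstNot p x)
  unfold phi
  omega

lemma iterate_mem (p : ℕ) (x : ℕ → ℕ) (hx : x ∈ GammaStar p) (n : ℕ) :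
    (odo p)^[n] x ∈ GammaStar p := by
  induction n with
  | zero => exact hx
  | succ n ih => rw [Function.iterate_succ_apply']; exact mem_gammaStar_odo ih

lemma phiSum_le (p : ℕ) (hp : 2 ≤ p) (n : ℕ) (x : ℕ → ℕ) (hx : x ∈ GammaStar p) :
    phiSum p n x ≤ n * (p - 2) := by
  unfold phiSum
  calc ∑ j ∈ Finset.range n, phi p ((odo p)^[j] x)
      ≤ ∑ _j ∈ Finset.range n, (p - 2) :=
        Finset.sum_le_sum fun j _ => phi_le p hp _ (iterate_mem p x hx j)
    _ = n * (p - 2) := by rw [Finset.sum_const, Finset.card_range, smul_eq_mul]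

lemma measurableSet_phiSum_eq (p n j : ℕ) :
    MeasurableSet {x : ℕ → ℕ | phiSum p n x = j} := by
  have h : {x : ℕ → ℕ | phiSum p n x = j} = phiSum p n ⁻¹' {j} := rfl
  rw [h]
  exact measurable_phiSum p n (measurableSet_singleton j)

lemma pim_eq_vol (p n j : ℕ) :
    pim p n j = volume ({u : ℝ | phiSum p n (digitsOf p u) = j} ∩ Set.Ico (0:ℝ) 1) := by
  unfold pim lam
  rw [Measure.map_apply (measurable_digitsOf p) (measurableSet_phiSum_eq p n j)]
  rw [Measure.restrict_apply ((measurable_digitsOf p) (measurableSet_phiSum_eq p n j))]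
  rfl

lemma pim_eq_zero (p : ℕ) (hp : 2 ≤ p) (n j : ℕ) (hj : n * (p - 2) < j) :
    pim p n j = 0 := by
  rw [pim_eq_vol]
  have h : {u : ℝ | phiSum p n (digitsOf p u) = j} ∩ Set.Ico (0:ℝ) 1 = ∅ := by
    apply Set.eq_empty_iff_forall_notMem.mpr
    rintro u ⟨h1, h2, h3⟩
    simp only [Set.mem_setOf_eq] at h1
    have := phiSum_le p hp n (digitsOf p u) (digits_mem_gammaStar p hp u h2)
    omega
  rw [h]
  exact measure_empty

lemma P_eq_sum (p : ℕ) (hp : 2 ≤ p) (n N : ℕ) (hN : n * (p - 2) ≤ N) (t : ℝ) :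
    P p n t = ∑ j ∈ Finset.range (N + 1), (pim p n j).toReal * t ^ j := by
  unfold P
  apply Finset.sum_subset
  · intro j hj
    simp only [Finset.mem_range] at *
    omega
  · intro j _ hj2
    simp only [Finset.mem_range, not_lt] at hj2
    rw [pim_eq_zero p hp n j (by omega)]
    simp

lemma key_eq (p : ℕ) (hp : 3 ≤ p) (m k : ℕ) (a : ℕ) (ha : a < p) (u : ℝ)
    (hu : u ∈ Set.Ico ((a:ℝ)/p) (((a:ℝ)+1)/p)) :
    phiSum p (p*m+k) (digitsOf p u) =
      (m * tri (p - 2) + ∑ i ∈ Finset.range k, f0 p ((a + i) % p)) +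
        phiSum p (m + (k + a)/p) (digitsOf p ((p:ℝ)*u - a)) := by
  have hp0 : 0 < p := by omega
  have hnn : (0:ℝ) ≤ (p:ℝ)*u - a := ((mem_piece_iff p a hp0 u).mp hu).1
  have hcons : digitsOf p u = cons a (digitsOf p ((p:ℝ)*u - a)) := by
    funext i
    cases i with
    | zero => exact digit0_eq p a hp0 ha u hu
    | succ i => exact tail_eq p a hp0 u hu.1 i
  rw [hcons,
    phiSum_cons p (by omega) (p*m+k) a _ ha (digits_mem_gammaStar p (by omega) _ hnn),
    sum_pm p (by omega) m k a,
    show p*m+k+a = p*m + (k+a) from by omega, Nat.mul_add_div hp0]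

lemma pim_piece (p : ℕ) (hp : 3 ≤ p) (m k : ℕ) (a : ℕ) (ha : a < p) (j : ℕ) :
    volume ({u : ℝ | phiSum p (p*m+k) (digitsOf p u) = j} ∩
        Set.Ico ((a:ℝ)/p) (((a:ℝ)+1)/p)) =
      ENNReal.ofReal (1/(p:ℝ)) *
        volume ({v : ℝ | (m * tri (p - 2) + ∑ i ∈ Finset.range k, f0 p ((a + i) % p)) +
          phiSum p (m + (k + a)/p) (digitsOf p v) = j} ∩ Set.Ico (0:ℝ) 1) := by
  have hp0 : 0 < p := by omega
  have hpr : (0:ℝ) < p := by exact_mod_cast hp0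
  have hset : {u : ℝ | phiSum p (p*m+k) (digitsOf p u) = j} ∩
      Set.Ico ((a:ℝ)/p) (((a:ℝ)+1)/p) =
      (fun u => (p:ℝ)*u - a) ⁻¹'
        ({v : ℝ | (m * tri (p - 2) + ∑ i ∈ Finset.range k, f0 p ((a + i) % p)) +
          phiSum p (m + (k + a)/p) (digitsOf p v) = j} ∩ Set.Ico (0:ℝ) 1) := by
    ext u
    simp only [Set.mem_inter_iff, Set.mem_setOf_eq, Set.mem_preimage]
    constructor
    · rintro ⟨h1, h2⟩
      refine ⟨?_, (mem_piece_iff p a hp0 u).mp h2⟩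
      rw [← key_eq p hp m k a ha u h2]
      exact h1
    · rintro ⟨h1, h3⟩
      have h2 : u ∈ Set.Ico ((a:ℝ)/p) (((a:ℝ)+1)/p) := (mem_piece_iff p a hp0 u).mpr h3
      exact ⟨by rw [key_eq p hp m k a ha u h2]; exact h1, h2⟩
  rw [hset]
  have hcomp : (fun u => (p:ℝ)*u - a) = (fun v => (-(a:ℝ)) + v) ∘ (fun u => (p:ℝ)*u) := by
    funext u
    simp only [Function.comp_apply]
    ring
  rw [hcomp, Set.preimage_comp,
    Real.volume_preimage_mul_left (ne_of_gt hpr), measure_preimage_add]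
  congr 1
  rw [abs_of_pos (by positivity), one_div]

lemma Ico_union (p : ℕ) (hp0 : 0 < p) :
    Set.Ico (0:ℝ) 1 = ⋃ a ∈ Finset.range p, Set.Ico ((a:ℝ)/p) (((a:ℝ)+1)/p) := by
  have hpr : (0:ℝ) < p := by exact_mod_cast hp0
  ext u
  simp only [Set.mem_Ico, Set.mem_iUnion, Finset.mem_range, exists_prop]
  constructor
  · rintro ⟨h0, h1⟩
    have hb0 : (0:ℝ) ≤ (p:ℝ) * u := by positivity
    have hb1 : (p:ℝ) * u < p := by nlinarith
    have hfl0 : 0 ≤ ⌊(p:ℝ) * u⌋ := Int.floor_nonneg.mpr hb0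
    have hfl1 : ⌊(p:ℝ) * u⌋ < (p:ℤ) := by
      apply Int.floor_lt.mpr
      exact_mod_cast hb1
    refine ⟨⌊(p:ℝ) * u⌋.toNat, by omega, ?_, ?_⟩
    · rw [div_le_iff₀ hpr]
      have h := Int.floor_le ((p:ℝ) * u)
      have hcast : ((⌊(p:ℝ) * u⌋.toNat : ℕ) : ℝ) = (⌊(p:ℝ) * u⌋ : ℝ) := by
        exact_mod_cast congrArg (fun z : ℤ => (z : ℝ)) (Int.toNat_of_nonneg hfl0)
      rw [hcast]
      linarith
    · rw [lt_div_iff₀ hpr]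
      have h := Int.lt_floor_add_one ((p:ℝ) * u)
      have hcast : ((⌊(p:ℝ) * u⌋.toNat : ℕ) : ℝ) = (⌊(p:ℝ) * u⌋ : ℝ) := by
        exact_mod_cast congrArg (fun z : ℤ => (z : ℝ)) (Int.toNat_of_nonneg hfl0)
      rw [hcast]
      linarith
  · rintro ⟨a, ha, h1, h2⟩
    have haR : (a:ℝ) < p := by exact_mod_cast ha
    constructor
    · have : (0:ℝ) ≤ (a:ℝ)/p := by positivity
      linarith
    · have : ((a:ℝ)+1)/p ≤ 1 := by
        rw [div_le_one hpr]
        have : (a:ℝ) + 1 ≤ p := by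
          have : (a:ℕ) + 1 ≤ p := ha
          exact_mod_cast this
        linarith
      linarith

lemma pieces_disjoint (p : ℕ) (hp0 : 0 < p) :
    (↑(Finset.range p) : Set ℕ).Pairwise (Function.onFun Disjoint
      (fun a : ℕ => Set.Ico ((a:ℝ)/p) (((a:ℝ)+1)/p))) := by
  have hpr : (0:ℝ) < p := by exact_mod_cast hp0
  intro a _ b _ hab
  unfold Function.onFun
  rw [Set.Ico_disjoint_Ico]
  rcases lt_or_gt_of_ne hab with h | h
  · have hcast : ((a:ℝ)+1) ≤ (b:ℝ) := by exact_mod_cast h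
    have hle : ((a:ℝ)+1)/p ≤ (b:ℝ)/p := by gcongr
    exact le_trans (min_le_left _ _) (le_trans hle (le_max_right _ _))
  · have hcast : ((b:ℝ)+1) ≤ (a:ℝ) := by exact_mod_cast h
    have hle : ((b:ℝ)+1)/p ≤ (a:ℝ)/p := by gcongr
    exact le_trans (min_le_right _ _) (le_trans hle (le_max_left _ _))

lemma pim_decomp (p : ℕ) (hp : 3 ≤ p) (m k : ℕ) (j : ℕ) :
    pim p (p*m+k) j = ∑ a ∈ Finset.range p, ENNReal.ofReal (1/(p:ℝ)) *
      volume ({v : ℝ | (m * tri (p - 2) + ∑ i ∈ Finset.range k, f0 p ((a + i) % p)) +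
        phiSum p (m + (k + a)/p) (digitsOf p v) = j} ∩ Set.Ico (0:ℝ) 1) := by
  have hp0 : 0 < p := by omega
  have hu : {u : ℝ | phiSum p (p*m+k) (digitsOf p u) = j} ∩ Set.Ico (0:ℝ) 1 =
      ⋃ a ∈ Finset.range p, ({u : ℝ | phiSum p (p*m+k) (digitsOf p u) = j} ∩
        Set.Ico ((a:ℝ)/p) (((a:ℝ)+1)/p)) := by
    rw [← Set.inter_iUnion₂, ← Ico_union p hp0]
  have hd : (↑(Finset.range p) : Set ℕ).Pairwise (Function.onFun Disjoint
      (fun a : ℕ => {u : ℝ | phiSum p (p*m+k) (digitsOf p u) = j} ∩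
        Set.Ico ((a:ℝ)/p) (((a:ℝ)+1)/p))) := by
    intro a ha b hb hab
    exact Disjoint.mono Set.inter_subset_right Set.inter_subset_right
      (pieces_disjoint p hp0 ha hb hab)
  have hm : ∀ a ∈ Finset.range p,
      MeasurableSet ({u : ℝ | phiSum p (p*m+k) (digitsOf p u) = j} ∩
        Set.Ico ((a:ℝ)/p) (((a:ℝ)+1)/p)) := by
    intro a _
    apply MeasurableSet.inter ?_ measurableSet_Ico
    have hpre : {u : ℝ | phiSum p (p*m+k) (digitsOf p u) = j} =
        (fun u => phiSum p (p*m+k) (digitsOf p u)) ⁻¹' {j} := rfl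
    rw [hpre]
    exact ((measurable_phiSum p (p*m+k)).comp (measurable_digitsOf p))
      (measurableSet_singleton j)
  rw [pim_eq_vol, hu, measure_biUnion_finset hd hm]
  exact Finset.sum_congr rfl fun a haa => pim_piece p hp m k a (Finset.mem_range.mp haa) j

lemma inner_sum (p c e R : ℕ) (hp : 2 ≤ p) (t : ℝ) (hR : e + c * (p - 2) ≤ R) :
    (∑ j ∈ Finset.range (R+1),
      (volume ({v : ℝ | e + phiSum p c (digitsOf p v) = j} ∩ Set.Ico (0:ℝ) 1)).toReal * t^j)
      = t^e * P p c t := by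
  rw [show R + 1 = e + (R + 1 - e) from by omega, Finset.sum_range_add]
  have h0 : ∀ j ∈ Finset.range e,
      (volume ({v : ℝ | e + phiSum p c (digitsOf p v) = j} ∩
        Set.Ico (0:ℝ) 1)).toReal * t^j = 0 := by
    intro j hj
    simp only [Finset.mem_range] at hj
    have hset : {v : ℝ | e + phiSum p c (digitsOf p v) = j} = ∅ := by
      ext v
      simp only [Set.mem_setOf_eq, Set.mem_empty_iff_false, iff_false]
      omega
    rw [hset, Set.empty_inter]
    simp
  rw [Finset.sum_eq_zero h0, zero_add]
  have h2 : ∀ s ∈ Finset.range (R+1-e),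
      (volume ({v : ℝ | e + phiSum p c (digitsOf p v) = e + s} ∩
        Set.Ico (0:ℝ) 1)).toReal * t^(e+s)
        = (t^e) * ((pim p c s).toReal * t^s) := by
    intro s _
    have h1 : volume ({v : ℝ | e + phiSum p c (digitsOf p v) = e + s} ∩ Set.Ico (0:ℝ) 1)
        = pim p c s := by
      rw [pim_eq_vol]
      congr 1
      ext v
      simp only [Set.mem_inter_iff, Set.mem_setOf_eq]
      constructor
      · rintro ⟨h, h'⟩
        exact ⟨by omega, h'⟩
      · rintro ⟨h, h'⟩
        exact ⟨by omega, h'⟩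
    rw [h1, pow_add]
    ring
  rw [Finset.sum_congr rfl h2, ← Finset.mul_sum]
  congr 1
  rw [show R+1-e = (R-e)+1 from by omega]
  exact (P_eq_sum p hp c (R-e) (by omega) t).symm

theorem statement_8 (p : ℕ) (hp : 3 ≤ p) (m k : ℕ) (hk0 : 0 < k) (hkp : k < p)
    (t : ℝ) :
    P p (p * m + k) t =
      (1 / (p : ℝ)) * t ^ (m * tri (p - 2) + tri (k - 1)) *
          (∑ j ∈ Finset.range (p - k), t ^ (j * k)) * P p m t
        + (1 / (p : ℝ)) * t ^ (m * tri (p - 2) + tri (k - 2)) *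
          (∑ j ∈ Finset.range k, t ^ (j * (p - k))) * P p (m + 1) t := by
  have hp2 : 2 ≤ p := by omega
  have hp0 : 0 < p := by omega
  set R := (p*m+k)*(p-2) + (m+1)*(p-2) with hRdef
  have hfin : ∀ (X : Set ℝ), volume (X ∩ Set.Ico (0:ℝ) 1) ≠ ⊤ := by
    intro X
    apply ne_top_of_le_ne_top ?_ (measure_mono Set.inter_subset_right)
    simp [Real.volume_Ico]
  have hstep1 : P p (p*m+k) t =
      ∑ j ∈ Finset.range (R+1), (pim p (p*m+k) j).toReal * t^j :=
    P_eq_sum p hp2 _ R (Nat.le_add_right _ _) t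
  have hstep2 : ∀ j, (pim p (p*m+k) j).toReal =
      ∑ a ∈ Finset.range p, (1/(p:ℝ)) *
        (volume ({v : ℝ | (m * tri (p - 2) + ∑ i ∈ Finset.range k, f0 p ((a + i) % p)) +
          phiSum p (m + (k + a)/p) (digitsOf p v) = j} ∩ Set.Ico (0:ℝ) 1)).toReal := by
    intro j
    rw [pim_decomp p hp m k j]
    rw [ENNReal.toReal_sum (fun a _ => ENNReal.mul_ne_top ENNReal.ofReal_ne_top (hfin _))]
    refine Finset.sum_congr rfl fun a _ => ?_
    rw [ENNReal.toReal_mul, ENNReal.toReal_ofReal (by positivity)]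
  rw [hstep1]
  simp only [hstep2]
  simp only [Finset.sum_mul]
  rw [Finset.sum_comm]
  have hinner : ∀ a ∈ Finset.range p,
      (∑ j ∈ Finset.range (R+1), (1/(p:ℝ)) *
        (volume ({v : ℝ | (m * tri (p - 2) + ∑ i ∈ Finset.range k, f0 p ((a + i) % p)) +
          phiSum p (m + (k + a)/p) (digitsOf p v) = j} ∩ Set.Ico (0:ℝ) 1)).toReal * t^j)
      = (1/(p:ℝ)) *
        (t^(m * tri (p - 2) + ∑ i ∈ Finset.range k, f0 p ((a + i) % p)) *
          P p (m + (k + a)/p) t) := by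
    intro a ha
    simp only [Finset.mem_range] at ha
    have hbound : (m * tri (p - 2) + ∑ i ∈ Finset.range k, f0 p ((a + i) % p)) +
        (m + (k + a)/p) * (p - 2) ≤ R := by
      have hE : m * tri (p - 2) + ∑ i ∈ Finset.range k, f0 p ((a + i) % p)
          ≤ (p*m+k)*(p-2) := by
        rw [← sum_pm p hp2 m k a]
        calc ∑ j ∈ Finset.range (p*m+k), f0 p ((a + j) % p)
            ≤ ∑ _j ∈ Finset.range (p*m+k), (p-2) :=
              Finset.sum_le_sum fun i _ => f0_le p _ hp2 (Nat.mod_lt _ hp0)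
          _ = (p*m+k)*(p-2) := by rw [Finset.sum_const, Finset.card_range, smul_eq_mul]
      have hc : (k + a)/p ≤ 1 := by
        have : (k + a)/p < 2 := (Nat.div_lt_iff_lt_mul hp0).mpr (by omega)
        omega
      have hc2 : (m + (k + a)/p) * (p - 2) ≤ (m+1)*(p-2) :=
        Nat.mul_le_mul_right _ (by omega)
      omega
    have heq := inner_sum p (m + (k + a)/p)
      (m * tri (p - 2) + ∑ i ∈ Finset.range k, f0 p ((a + i) % p)) R hp2 t hbound
    calc (∑ j ∈ Finset.range (R+1), (1/(p:ℝ)) *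
        (volume ({v : ℝ | (m * tri (p - 2) + ∑ i ∈ Finset.range k, f0 p ((a + i) % p)) +
          phiSum p (m + (k + a)/p) (digitsOf p v) = j} ∩ Set.Ico (0:ℝ) 1)).toReal * t^j)
        = (1/(p:ℝ)) * ∑ j ∈ Finset.range (R+1),
          (volume ({v : ℝ | (m * tri (p - 2) + ∑ i ∈ Finset.range k, f0 p ((a + i) % p)) +
            phiSum p (m + (k + a)/p) (digitsOf p v) = j} ∩ Set.Ico (0:ℝ) 1)).toReal * t^j := by
          rw [Finset.mul_sum]
          exact Finset.sum_congr rfl fun j _ => by ring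
      _ = _ := by rw [heq]
  rw [Finset.sum_congr rfl hinner]
  rw [show Finset.range p = Finset.range ((p-k)+k) from by congr 1; omega,
    Finset.sum_range_add]
  have hfirst : ∀ a ∈ Finset.range (p-k),
      (1/(p:ℝ)) * (t^(m * tri (p - 2) + ∑ i ∈ Finset.range k, f0 p ((a + i) % p)) *
        P p (m + (k + a)/p) t)
      = ((1/(p:ℝ)) * t^(m * tri (p - 2) + tri (k-1)) * P p m t) * t^(a*k) := by
    intro a ha
    simp only [Finset.mem_range] at ha
    rw [E1 p k a hp2 hk0 hkp ha,
      show (k + a)/p = 0 from Nat.div_eq_of_lt (by omega), Nat.add_zero,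
      show m * tri (p - 2) + (k*a + tri (k-1)) =
        (m * tri (p - 2) + tri (k-1)) + a*k from by ring,
      pow_add]
    ring
  have hsecond : ∀ i ∈ Finset.range k,
      (1/(p:ℝ)) * (t^(m * tri (p - 2) + ∑ i' ∈ Finset.range k, f0 p ((p - k + i + i') % p)) *
        P p (m + (k + (p - k + i))/p) t)
      = ((1/(p:ℝ)) * t^(m * tri (p - 2) + tri (k-2)) * P p (m+1) t) * t^((k-1-i)*(p-k)) := by
    intro i hi
    simp only [Finset.mem_range] at hi
    rw [E2 p k i hp2 hk0 hkp hi,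
      show (k + (p - k + i))/p = 1 from by
        rw [show k + (p - k + i) = i + p from by omega, Nat.add_div_right _ hp0,
          Nat.div_eq_of_lt (by omega)],
      show m * tri (p - 2) + (tri (k-2) + (k-1-i)*(p-k)) =
        (m * tri (p - 2) + tri (k-2)) + (k-1-i)*(p-k) from by ring,
      pow_add]
    ring
  rw [Finset.sum_congr rfl hfirst, Finset.sum_congr rfl hsecond,
    ← Finset.mul_sum, ← Finset.mul_sum,
    Finset.sum_range_reflect (fun i => t^(i*(p-k))) k]
  ring

end Chacon
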